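/- The polynomials P_n(t) = ∑_{π ∈ AV₁₃₂(n)} t^{a₂₁(π)}, where a₂₁(π) is the number of inversions of π, satisfy the recurrence P_n(t) = ∑_{k=1}^{n} t^{k(n-k)} P_{k-1}(t) P_{n-k}(t) with P_0(t) = 1. -/

import Mathlib

open Finset

/-- A permutation of `{1,…,n}` (modeled on `Fin n`) is 132-avoiding if there are
no indices `i < j < l` with `π i < π l < π j`. -/
def avoids132 {n : ℕ} (π : Equiv.Perm (Fin n)) : Prop :=
  ∀ i j l : Fin n, i < j → j < l → ¬(π i < π l ∧ π l < π j)

instance avoids132.dec {n : ℕ} : DecidablePred (avoids132 (n := n)) := fun π => by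
  unfold avoids132; infer_instance

/-- A permutation is 123-avoiding if there are no indices `i < j < l` with
`π i < π j < π l`. -/
def avoids123 {n : ℕ} (π : Equiv.Perm (Fin n)) : Prop :=
  ∀ i j l : Fin n, i < j → j < l → ¬(π i < π j ∧ π j < π l)

instance avoids123.dec {n : ℕ} : DecidablePred (avoids123 (n := n)) := fun π => by
  unfold avoids123; infer_instance

/-- The finite set of 132-avoiding permutations of `{1,…,n}`. -/
def AV132 (n : ℕ) : Finset (Equiv.Perm (Fin n)) := univ.filter avoids132

/-- The finite set of 123-avoiding permutations of `{1,…,n}`. -/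
def AV123 (n : ℕ) : Finset (Equiv.Perm (Fin n)) := univ.filter avoids123

/-- number of non-inversions: pairs `i < j` with `π i < π j` (pattern 12). -/
def a12 {n : ℕ} (π : Equiv.Perm (Fin n)) : ℕ :=
  (univ.filter (fun p : Fin n × Fin n => p.1 < p.2 ∧ π p.1 < π p.2)).card

/-- number of inversions: pairs `i < j` with `π j < π i` (pattern 21). -/
def a21 {n : ℕ} (π : Equiv.Perm (Fin n)) : ℕ :=
  (univ.filter (fun p : Fin n × Fin n => p.1 < p.2 ∧ π p.2 < π p.1)).card

/-- occurrences of pattern 123: triples `i < j < l` with `π i < π j < π l`. -/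
def a123 {n : ℕ} (π : Equiv.Perm (Fin n)) : ℕ :=
  (univ.filter (fun p : Fin n × Fin n × Fin n =>
    p.1 < p.2.1 ∧ p.2.1 < p.2.2 ∧ π p.1 < π p.2.1 ∧ π p.2.1 < π p.2.2)).card

/-- occurrences of pattern 321: triples `i < j < l` with `π l < π j < π i`. -/
def a321 {n : ℕ} (π : Equiv.Perm (Fin n)) : ℕ :=
  (univ.filter (fun p : Fin n × Fin n × Fin n =>
    p.1 < p.2.1 ∧ p.2.1 < p.2.2 ∧ π p.2.2 < π p.2.1 ∧ π p.2.1 < π p.1)).card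

/-- occurrences of pattern 231: triples `i < j < l` with `π l < π i < π j`. -/
def a231 {n : ℕ} (π : Equiv.Perm (Fin n)) : ℕ :=
  (univ.filter (fun p : Fin n × Fin n × Fin n =>
    p.1 < p.2.1 ∧ p.2.1 < p.2.2 ∧ π p.2.2 < π p.1 ∧ π p.1 < π p.2.1)).card

/-- occurrences of pattern 213: triples `i < j < l` with `π j < π i < π l`. -/
def a213 {n : ℕ} (π : Equiv.Perm (Fin n)) : ℕ :=
  (univ.filter (fun p : Fin n × Fin n × Fin n =>
    p.1 < p.2.1 ∧ p.2.1 < p.2.2 ∧ π p.2.1 < π p.1 ∧ π p.1 < π p.2.2)).card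

/-- occurrences of pattern 312: triples `i < j < l` with `π j < π l < π i`. -/
def a312 {n : ℕ} (π : Equiv.Perm (Fin n)) : ℕ :=
  (univ.filter (fun p : Fin n × Fin n × Fin n =>
    p.1 < p.2.1 ∧ p.2.1 < p.2.2 ∧ π p.2.1 < π p.2.2 ∧ π p.2.2 < π p.1)).card

/-- occurrences of pattern 4321: quadruples `i < j < l < m` with
`π m < π l < π j < π i`. -/
def a4321 {n : ℕ} (π : Equiv.Perm (Fin n)) : ℕ :=
  (univ.filter (fun p : Fin n × Fin n × Fin n × Fin n =>
    p.1 < p.2.1 ∧ p.2.1 < p.2.2.1 ∧ p.2.2.1 < p.2.2.2 ∧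
    π p.2.2.2 < π p.2.2.1 ∧ π p.2.2.1 < π p.2.1 ∧ π p.2.1 < π p.1)).card

open Polynomial

/-- The weight enumerator of 132-avoiding permutations by inversions. -/
noncomputable def P21 (n : ℕ) : Polynomial ℤ :=
  ∑ π ∈ AV132 n, (Polynomial.X : Polynomial ℤ) ^ a21 π

section Helpers

lemma card_filter_lt (N m : ℕ) (h : m ≤ N) :
    ((univ : Finset (Fin N)).filter fun i : Fin N => (i : ℕ) < m).card = m := by
  have key : ((univ : Finset (Fin N)).filter fun i : Fin N => (i : ℕ) < m).card
      = (univ : Finset (Fin m)).card := by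
    refine Finset.card_bij' (fun (x : Fin N) hx => (⟨(x : ℕ), (mem_filter.mp hx).2⟩ : Fin m))
      (fun (y : Fin m) _ => (⟨(y : ℕ), by omega⟩ : Fin N)) ?_ ?_ ?_ ?_
    · intro x hx; exact mem_univ _
    · intro y hy
      simp only [mem_filter, mem_univ, true_and]
      exact y.isLt
    · intro x hx; apply Fin.ext; rfl
    · intro y hy; apply Fin.ext; rfl
  simpa using key

lemma card_filter_ge (N m : ℕ) (h : m ≤ N) :
    ((univ : Finset (Fin N)).filter fun i : Fin N => m ≤ (i : ℕ)).card = N - m := by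
  have h1 := Finset.card_filter_add_card_filter_not
    (s := (univ : Finset (Fin N))) (p := fun i : Fin N => (i : ℕ) < m)
  have h2 : ((univ : Finset (Fin N)).filter fun i : Fin N => ¬ (i : ℕ) < m)
      = (univ : Finset (Fin N)).filter fun i : Fin N => m ≤ (i : ℕ) := by
    ext x; simp [not_lt]
  rw [card_filter_lt N m h, h2, Finset.card_univ, Fintype.card_fin] at h1
  omega

end Helpers

section Glue

variable {a b : ℕ}

private lemma lt_aux1 (y : Fin b) : (y : ℕ) < a + 1 + b := by have := y.isLt; omega
private lemma lt_aux2 (y : Fin a) : b + (y : ℕ) < a + 1 + b := by have := y.isLt; omega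

def glueFun (σ : Equiv.Perm (Fin a)) (τ : Equiv.Perm (Fin b)) (i : Fin (a + 1 + b)) :
    Fin (a + 1 + b) :=
  if h : (i : ℕ) < a then ⟨b + σ ⟨i, h⟩, lt_aux2 _⟩
  else if _h2 : (i : ℕ) = a then ⟨a + b, by omega⟩
  else ⟨(τ ⟨(i : ℕ) - a - 1, by have := i.isLt; omega⟩ : ℕ), lt_aux1 _⟩

variable (σ : Equiv.Perm (Fin a)) (τ : Equiv.Perm (Fin b))

lemma glueFun_val_lt {i : Fin (a + 1 + b)} (h : (i : ℕ) < a) :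
    (glueFun σ τ i : ℕ) = b + σ ⟨i, h⟩ := by
  simp only [glueFun, dif_pos h]

lemma glueFun_val_eq {i : Fin (a + 1 + b)} (h : (i : ℕ) = a) :
    (glueFun σ τ i : ℕ) = a + b := by
  simp only [glueFun]; rw [dif_neg (by omega), dif_pos h]

lemma glueFun_val_gt {i : Fin (a + 1 + b)} (h : a < (i : ℕ)) (h' : (i : ℕ) - a - 1 < b) :
    (glueFun σ τ i : ℕ) = τ ⟨(i : ℕ) - a - 1, h'⟩ := by
  simp only [glueFun]; rw [dif_neg (by omega), dif_neg (by omega)]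

lemma glueFun_low {i : Fin (a + 1 + b)} (h : a < (i : ℕ)) : (glueFun σ τ i : ℕ) < b := by
  have hi := i.isLt
  rw [glueFun_val_gt σ τ h (by omega)]
  exact (τ _).isLt

lemma glueFun_high {i : Fin (a + 1 + b)} (h : (i : ℕ) ≤ a) : b ≤ (glueFun σ τ i : ℕ) := by
  rcases lt_or_eq_of_le h with h | h
  · rw [glueFun_val_lt σ τ h]; omega
  · rw [glueFun_val_eq σ τ h]; omega

lemma glueFun_injective : Function.Injective (glueFun σ τ) := by
  intro i j hij
  have hval := congrArg Fin.val hij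
  have hi := i.isLt; have hj := j.isLt
  rcases lt_trichotomy ((i : ℕ)) a with h1 | h1 | h1 <;>
    rcases lt_trichotomy ((j : ℕ)) a with h2 | h2 | h2
  · rw [glueFun_val_lt σ τ h1, glueFun_val_lt σ τ h2] at hval
    have : σ ⟨i, h1⟩ = σ ⟨j, h2⟩ := Fin.ext (by omega)
    have := congrArg Fin.val (σ.injective this)
    exact Fin.ext this
  · rw [glueFun_val_lt σ τ h1, glueFun_val_eq σ τ h2] at hval
    have := (σ (⟨i, h1⟩ : Fin a)).isLt; omega
  · rw [glueFun_val_lt σ τ h1, glueFun_val_gt σ τ h2 (by omega)] at hval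
    have := (τ (⟨(j : ℕ) - a - 1, by omega⟩ : Fin b)).isLt; omega
  · rw [glueFun_val_eq σ τ h1, glueFun_val_lt σ τ h2] at hval
    have := (σ (⟨j, h2⟩ : Fin a)).isLt; omega
  · exact Fin.ext (by omega)
  · rw [glueFun_val_eq σ τ h1, glueFun_val_gt σ τ h2 (by omega)] at hval
    have := (τ (⟨(j : ℕ) - a - 1, by omega⟩ : Fin b)).isLt; omega
  · rw [glueFun_val_gt σ τ h1 (by omega), glueFun_val_lt σ τ h2] at hval
    have := (τ (⟨(i : ℕ) - a - 1, by omega⟩ : Fin b)).isLt; omega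
  · rw [glueFun_val_gt σ τ h1 (by omega), glueFun_val_eq σ τ h2] at hval
    have := (τ (⟨(i : ℕ) - a - 1, by omega⟩ : Fin b)).isLt; omega
  · rw [glueFun_val_gt σ τ h1 (by omega), glueFun_val_gt σ τ h2 (by omega)] at hval
    have : τ ⟨(i : ℕ) - a - 1, by omega⟩ = τ ⟨(j : ℕ) - a - 1, by omega⟩ := Fin.ext (by omega)
    have := congrArg Fin.val (τ.injective this)
    simp only at this
    exact Fin.ext (by omega)

noncomputable def glue : Equiv.Perm (Fin (a + 1 + b)) :=
  Equiv.ofBijective _ ((Finite.injective_iff_bijective).mp (glueFun_injective σ τ))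

lemma glue_apply (i : Fin (a + 1 + b)) : glue σ τ i = glueFun σ τ i := rfl

end Glue

private lemma emb_lt {a b : ℕ} (x : Fin a) : (x : ℕ) < a + 1 + b := by
  have := x.isLt; omega

private lemma shift_lt {a b : ℕ} (x : Fin b) : a + 1 + (x : ℕ) < a + 1 + b := by
  have := x.isLt; omega

section Avoid

variable {a b : ℕ} (σ : Equiv.Perm (Fin a)) (τ : Equiv.Perm (Fin b))

lemma glueFun_val_emb (x : Fin a) :
    (glueFun σ τ ⟨(x : ℕ), emb_lt x⟩ : ℕ) = b + σ x := by
  rw [glueFun_val_lt σ τ x.isLt]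

lemma glueFun_val_shift (x : Fin b) :
    (glueFun σ τ ⟨a + 1 + (x : ℕ), shift_lt x⟩ : ℕ) = τ x := by
  have hx := x.isLt
  rw [glueFun_val_gt σ τ (show a < a + 1 + (x : ℕ) by omega)
    (show a + 1 + (x : ℕ) - a - 1 < b by omega)]
  refine congrArg (fun y : Fin b => ((τ y : Fin b) : ℕ)) (Fin.ext ?_)
  exact (by omega : a + 1 + (x : ℕ) - a - 1 = (x : ℕ))

set_option maxHeartbeats 1000000 in
lemma glue_avoids (hσ : avoids132 σ) (hτ : avoids132 τ) : avoids132 (glue σ τ) := by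
  intro i j l hij hjl hpat
  obtain ⟨h1, h2⟩ := hpat
  rw [Fin.lt_def] at hij hjl
  rw [glue_apply, glue_apply] at h1 h2
  rw [Fin.lt_def] at h1 h2
  have hi := i.isLt; have hj := j.isLt; have hl := l.isLt
  rcases lt_trichotomy ((j : ℕ)) a with hja | hja | hja
  · -- i < j < a
    have hia : (i : ℕ) < a := by omega
    rcases lt_trichotomy ((l : ℕ)) a with hla | hla | hla
    · -- all in prefix: σ pattern
      rw [glueFun_val_lt σ τ hia, glueFun_val_lt σ τ hla] at h1
      rw [glueFun_val_lt σ τ hla, glueFun_val_lt σ τ hja] at h2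
      exact hσ ⟨i, hia⟩ ⟨j, hja⟩ ⟨l, hla⟩ (by rw [Fin.lt_def]; exact hij)
        (by rw [Fin.lt_def]; exact hjl)
        ⟨by rw [Fin.lt_def]; omega, by rw [Fin.lt_def]; omega⟩
    · -- l = a : glue l = a + b is max, but glue l < glue j
      rw [glueFun_val_eq σ τ hla, glueFun_val_lt σ τ hja] at h2
      have := (σ (⟨(j : ℕ), hja⟩ : Fin a)).isLt; omega
    · -- l in suffix : glue l < b ≤ glue i, contradicts h1
      have := glueFun_low σ τ (i := l) hla
      have := glueFun_high σ τ (i := i) (le_of_lt hia)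
      omega
  · -- j = a : l > a so glue l < b ≤ glue i, contradicts h1
    have hia : (i : ℕ) < a := by omega
    have := glueFun_low σ τ (i := l) (by omega)
    have := glueFun_high σ τ (i := i) (le_of_lt hia)
    omega
  · -- j in suffix
    rcases lt_trichotomy ((i : ℕ)) a with hia | hia | hia
    · have := glueFun_low σ τ (i := l) (by omega)
      have := glueFun_high σ τ (i := i) (le_of_lt hia)
      omega
    · have := glueFun_low σ τ (i := l) (by omega)
      have := glueFun_high σ τ (i := i) (by omega)
      omega
    · -- all in suffix : τ pattern
      have hla : a < (l : ℕ) := by omega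
      have hib : (i : ℕ) - a - 1 < b := by omega
      have hjb : (j : ℕ) - a - 1 < b := by omega
      have hlb : (l : ℕ) - a - 1 < b := by omega
      rw [glueFun_val_gt σ τ hia hib, glueFun_val_gt σ τ hla hlb] at h1
      rw [glueFun_val_gt σ τ hla hlb, glueFun_val_gt σ τ hja hjb] at h2
      exact hτ ⟨(i : ℕ) - a - 1, by omega⟩ ⟨(j : ℕ) - a - 1, by omega⟩
        ⟨(l : ℕ) - a - 1, by omega⟩ (by rw [Fin.lt_def]; show (i:ℕ) - a - 1 < (j:ℕ) - a - 1; omega)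
        (by rw [Fin.lt_def]; show (j:ℕ) - a - 1 < (l:ℕ) - a - 1; omega)
        ⟨by rw [Fin.lt_def]; omega, by rw [Fin.lt_def]; omega⟩

lemma glue_avoids_rev (h : avoids132 (glue σ τ)) : avoids132 σ ∧ avoids132 τ := by
  constructor
  · intro x y z hxy hyz hpat
    obtain ⟨h1, h2⟩ := hpat
    rw [Fin.lt_def] at hxy hyz h1 h2
    have hx := x.isLt; have hy := y.isLt; have hz := z.isLt
    refine h ⟨(x : ℕ), by omega⟩ ⟨(y : ℕ), by omega⟩ ⟨(z : ℕ), by omega⟩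
      (by rw [Fin.lt_def]; exact hxy) (by rw [Fin.lt_def]; exact hyz) ?_
    rw [glue_apply, glue_apply, glue_apply, Fin.lt_def, Fin.lt_def]
    rw [glueFun_val_emb σ τ x, glueFun_val_emb σ τ y, glueFun_val_emb σ τ z]
    omega
  · intro x y z hxy hyz hpat
    obtain ⟨h1, h2⟩ := hpat
    rw [Fin.lt_def] at hxy hyz h1 h2
    have hx := x.isLt; have hy := y.isLt; have hz := z.isLt
    refine h ⟨a + 1 + (x : ℕ), by omega⟩ ⟨a + 1 + (y : ℕ), by omega⟩ ⟨a + 1 + (z : ℕ), by omega⟩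
      (by rw [Fin.lt_def]; show a + 1 + (x:ℕ) < a + 1 + (y:ℕ); omega)
      (by rw [Fin.lt_def]; show a + 1 + (y:ℕ) < a + 1 + (z:ℕ); omega) ?_
    rw [glue_apply, glue_apply, glue_apply, Fin.lt_def, Fin.lt_def]
    rw [glueFun_val_shift σ τ x, glueFun_val_shift σ τ y, glueFun_val_shift σ τ z]
    omega

end Avoid

section Count

variable {a b : ℕ} (σ : Equiv.Perm (Fin a)) (τ : Equiv.Perm (Fin b))

set_option maxHeartbeats 3200000 in
lemma a21_glue : a21 (glue σ τ) = a21 σ + a21 τ + (a + 1) * b := by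
  classical
  set N := a + 1 + b with hN
  have hsplit : (univ.filter fun p : Fin N × Fin N =>
        p.1 < p.2 ∧ glue σ τ p.2 < glue σ τ p.1)
      = (univ.filter fun p : Fin N × Fin N =>
          (p.2 : ℕ) < a ∧ p.1 < p.2 ∧ glue σ τ p.2 < glue σ τ p.1)
        ∪ ((univ.filter fun p : Fin N × Fin N =>
          a < (p.1 : ℕ) ∧ p.1 < p.2 ∧ glue σ τ p.2 < glue σ τ p.1)
        ∪ (univ.filter fun p : Fin N × Fin N => (p.1 : ℕ) ≤ a ∧ a < (p.2 : ℕ))) := by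
    ext p
    simp only [mem_filter, mem_union, mem_univ, true_and]
    constructor
    · rintro ⟨h1, h2⟩
      rcases lt_trichotomy ((p.2 : ℕ)) a with hc | hc | hc
      · exact Or.inl ⟨hc, h1, h2⟩
      · exfalso
        rw [Fin.lt_def, glue_apply, glue_apply] at h2
        rw [glueFun_val_eq σ τ hc] at h2
        have := (glueFun σ τ p.1).isLt
        omega
      · by_cases hd : (p.1 : ℕ) ≤ a
        · exact Or.inr (Or.inr ⟨hd, hc⟩)
        · exact Or.inr (Or.inl ⟨by omega, h1, h2⟩)
    · rintro (⟨_, h1, h2⟩ | ⟨_, h1, h2⟩ | ⟨h1, h2⟩)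
      · exact ⟨h1, h2⟩
      · exact ⟨h1, h2⟩
      · refine ⟨Fin.lt_def.mpr (by omega), ?_⟩
        rw [Fin.lt_def, glue_apply, glue_apply]
        have := glueFun_low σ τ (i := p.2) h2
        have := glueFun_high σ τ (i := p.1) h1
        omega
  have hdisj1 : Disjoint
      (univ.filter fun p : Fin N × Fin N =>
        (p.2 : ℕ) < a ∧ p.1 < p.2 ∧ glue σ τ p.2 < glue σ τ p.1)
      ((univ.filter fun p : Fin N × Fin N =>
        a < (p.1 : ℕ) ∧ p.1 < p.2 ∧ glue σ τ p.2 < glue σ τ p.1)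
      ∪ (univ.filter fun p : Fin N × Fin N => (p.1 : ℕ) ≤ a ∧ a < (p.2 : ℕ))) := by
    rw [Finset.disjoint_left]
    intro p hp hq
    simp only [mem_filter, mem_union, mem_univ, true_and] at hp hq
    obtain ⟨ha2, hlt, -⟩ := hp
    rw [Fin.lt_def] at hlt
    rcases hq with ⟨h, _⟩ | ⟨_, h⟩ <;> omega
  have hdisj2 : Disjoint
      (univ.filter fun p : Fin N × Fin N =>
        a < (p.1 : ℕ) ∧ p.1 < p.2 ∧ glue σ τ p.2 < glue σ τ p.1)
      (univ.filter fun p : Fin N × Fin N => (p.1 : ℕ) ≤ a ∧ a < (p.2 : ℕ)) := by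
    rw [Finset.disjoint_left]
    intro p hp hq
    simp only [mem_filter, mem_univ, true_and] at hp hq
    omega
  have hc1 : (univ.filter fun p : Fin N × Fin N =>
      (p.2 : ℕ) < a ∧ p.1 < p.2 ∧ glue σ τ p.2 < glue σ τ p.1).card = a21 σ := by
    rw [a21]
    refine Finset.card_bij'
      (fun (p : Fin N × Fin N) hp =>
        ((⟨(p.1 : ℕ), by
            obtain ⟨-, h1, h2, -⟩ := mem_filter.mp hp
            exact lt_trans (Fin.lt_def.mp h2) h1⟩ : Fin a),
         (⟨(p.2 : ℕ), (mem_filter.mp hp).2.1⟩ : Fin a)))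
      (fun (q : Fin a × Fin a) _ =>
        ((⟨(q.1 : ℕ), by have := q.1.isLt; omega⟩ : Fin N),
         (⟨(q.2 : ℕ), by have := q.2.isLt; omega⟩ : Fin N))) ?_ ?_ ?_ ?_
    · intro p hp
      obtain ⟨-, h1, h2, h3⟩ := mem_filter.mp hp
      have hp1 : (p.1 : ℕ) < a := lt_trans (Fin.lt_def.mp h2) h1
      simp only [mem_filter, mem_univ, true_and]
      refine ⟨Fin.lt_def.mpr (Fin.lt_def.mp h2), ?_⟩
      rw [Fin.lt_def, glue_apply, glue_apply] at h3
      rw [glueFun_val_lt σ τ (i := p.1) hp1, glueFun_val_lt σ τ (i := p.2) h1] at h3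
      rw [Fin.lt_def]
      exact (by omega : ((σ ⟨(p.2 : ℕ), h1⟩ : Fin a) : ℕ) < ((σ ⟨(p.1 : ℕ), hp1⟩ : Fin a) : ℕ))
    · intro q hq
      obtain ⟨-, h1, h2⟩ := mem_filter.mp hq
      simp only [mem_filter, mem_univ, true_and]
      have hq1 := q.1.isLt; have hq2 := q.2.isLt
      refine ⟨hq2, Fin.lt_def.mpr (Fin.lt_def.mp h1), Fin.lt_def.mpr ?_⟩
      rw [glue_apply, glue_apply]
      rw [glueFun_val_lt σ τ (show ((⟨(q.1 : ℕ), by omega⟩ : Fin N) : ℕ) < a from hq1),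
        glueFun_val_lt σ τ (show ((⟨(q.2 : ℕ), by omega⟩ : Fin N) : ℕ) < a from hq2)]
      have e1 : (⟨((⟨(q.1 : ℕ), by omega⟩ : Fin N) : ℕ), hq1⟩ : Fin a) = q.1 := Fin.ext rfl
      have e2 : (⟨((⟨(q.2 : ℕ), by omega⟩ : Fin N) : ℕ), hq2⟩ : Fin a) = q.2 := Fin.ext rfl
      rw [e1, e2]
      have := Fin.lt_def.mp h2
      omega
    · intro p hp
      exact Prod.ext (Fin.ext rfl) (Fin.ext rfl)
    · intro q hq
      exact Prod.ext (Fin.ext rfl) (Fin.ext rfl)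
  have hc2 : (univ.filter fun p : Fin N × Fin N =>
      a < (p.1 : ℕ) ∧ p.1 < p.2 ∧ glue σ τ p.2 < glue σ τ p.1).card = a21 τ := by
    rw [a21]
    refine Finset.card_bij'
      (fun (p : Fin N × Fin N) hp =>
        ((⟨(p.1 : ℕ) - a - 1, by
            obtain ⟨-, h1, h2, -⟩ := mem_filter.mp hp
            have := p.1.isLt; omega⟩ : Fin b),
         (⟨(p.2 : ℕ) - a - 1, by
            obtain ⟨-, h1, h2, -⟩ := mem_filter.mp hp
            have := p.2.isLt; have := Fin.lt_def.mp h2; omega⟩ : Fin b)))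
      (fun (q : Fin b × Fin b) _ =>
        ((⟨a + 1 + (q.1 : ℕ), by have := q.1.isLt; omega⟩ : Fin N),
         (⟨a + 1 + (q.2 : ℕ), by have := q.2.isLt; omega⟩ : Fin N))) ?_ ?_ ?_ ?_
    · intro p hp
      obtain ⟨-, h1, h2, h3⟩ := mem_filter.mp hp
      have hp1 := p.1.isLt; have hp2 := p.2.isLt
      have hlt := Fin.lt_def.mp h2
      have hb1 : (p.1 : ℕ) - a - 1 < b := by omega
      have hb2 : (p.2 : ℕ) - a - 1 < b := by omega
      simp only [mem_filter, mem_univ, true_and]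
      refine ⟨Fin.lt_def.mpr (show (p.1 : ℕ) - a - 1 < (p.2 : ℕ) - a - 1 by omega), ?_⟩
      rw [Fin.lt_def, glue_apply, glue_apply] at h3
      rw [glueFun_val_gt σ τ (i := p.1) h1 hb1,
        glueFun_val_gt σ τ (i := p.2) (by omega) hb2] at h3
      rw [Fin.lt_def]
      exact (by omega : ((τ ⟨(p.2 : ℕ) - a - 1, hb2⟩ : Fin b) : ℕ)
        < ((τ ⟨(p.1 : ℕ) - a - 1, hb1⟩ : Fin b) : ℕ))
    · intro q hq
      obtain ⟨-, h1, h2⟩ := mem_filter.mp hq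
      simp only [mem_filter, mem_univ, true_and]
      have hq1 := q.1.isLt; have hq2 := q.2.isLt
      refine ⟨by omega, Fin.lt_def.mpr (show a + 1 + (q.1 : ℕ) < a + 1 + (q.2 : ℕ) by
        have := Fin.lt_def.mp h1; omega), Fin.lt_def.mpr ?_⟩
      rw [glue_apply, glue_apply]
      rw [glueFun_val_shift σ τ q.1, glueFun_val_shift σ τ q.2]
      exact Fin.lt_def.mp h2
    · intro p hp
      obtain ⟨-, h1, h2, -⟩ := mem_filter.mp hp
      have := Fin.lt_def.mp h2
      exact Prod.ext (Fin.ext (by show a + 1 + ((p.1 : ℕ) - a - 1) = (p.1 : ℕ); omega))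
        (Fin.ext (by show a + 1 + ((p.2 : ℕ) - a - 1) = (p.2 : ℕ); omega))
    · intro q hq
      exact Prod.ext (Fin.ext (by show a + 1 + (q.1 : ℕ) - a - 1 = (q.1 : ℕ); omega))
        (Fin.ext (by show a + 1 + (q.2 : ℕ) - a - 1 = (q.2 : ℕ); omega))
  have hc3 : (univ.filter fun p : Fin N × Fin N =>
      (p.1 : ℕ) ≤ a ∧ a < (p.2 : ℕ)).card = (a + 1) * b := by
    have hprod : (univ.filter fun p : Fin N × Fin N => (p.1 : ℕ) ≤ a ∧ a < (p.2 : ℕ))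
        = ((univ : Finset (Fin N)).filter fun i : Fin N => (i : ℕ) ≤ a)
          ×ˢ ((univ : Finset (Fin N)).filter fun j : Fin N => a < (j : ℕ)) := by
      ext p
      simp [Finset.mem_product]
    rw [hprod, Finset.card_product]
    have e1 : ((univ : Finset (Fin N)).filter fun i : Fin N => (i : ℕ) ≤ a)
        = (univ : Finset (Fin N)).filter fun i : Fin N => (i : ℕ) < a + 1 := by
      ext x; simp
    have e2 : ((univ : Finset (Fin N)).filter fun i : Fin N => a < (i : ℕ))
        = (univ : Finset (Fin N)).filter fun i : Fin N => a + 1 ≤ (i : ℕ) := by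
      ext x; simp
    rw [e1, e2, card_filter_lt N (a + 1) (by omega), card_filter_ge N (a + 1) (by omega)]
    have : N - (a + 1) = b := by omega
    rw [this]
  rw [a21, hsplit, card_union_of_disjoint hdisj1, card_union_of_disjoint hdisj2,
    hc1, hc2, hc3]
  omega

end Count

section Surj

variable {a b : ℕ}

set_option maxHeartbeats 3200000 in
lemma glue_surj (π : Equiv.Perm (Fin (a + 1 + b))) (hπ : avoids132 π)
    (hmax : ((π ⟨a, by omega⟩ : Fin (a + 1 + b)) : ℕ) = a + b) :
    ∃ σ : Equiv.Perm (Fin a), ∃ τ : Equiv.Perm (Fin b), glue σ τ = π := by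
  classical
  have hNa : a < (a + 1 + b) := by omega
  -- every value other than at position a is < a + b
  have hne : ∀ i : Fin (a + 1 + b), (i : ℕ) ≠ a → (π i : ℕ) < a + b := by
    intro i hi
    have h1 : π i ≠ π ⟨a, hNa⟩ := fun h => hi (by
      have := π.injective h; rw [this])
    have h2 := (π i).isLt
    have : (π i : ℕ) ≠ a + b := fun h => h1 (Fin.ext (by rw [h, hmax]))
    omega
  -- cross inequality
  have hcross : ∀ i l : Fin (a + 1 + b), (i : ℕ) < a → a < (l : ℕ) → (π l : ℕ) < (π i : ℕ) := by
    intro i l hi hl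
    have hspec := hπ i ⟨a, hNa⟩ l (Fin.lt_def.mpr hi) (Fin.lt_def.mpr hl)
    have hl1 : (π l : ℕ) < a + b := hne l (by omega)
    have hi1 : (π i : ℕ) < a + b := hne i (by omega)
    have hlmax : π l < π ⟨a, hNa⟩ := Fin.lt_def.mpr (by rw [hmax]; omega)
    have hd : π i ≠ π l := fun h => by
      have := π.injective h
      rw [this] at hi; omega
    rcases lt_or_gt_of_ne hd with h | h
    · exact absurd ⟨h, hlmax⟩ hspec
    · exact Fin.lt_def.mp h
  -- suffix values are < b
  have hsuffix : ∀ l : Fin (a + 1 + b), a < (l : ℕ) → (π l : ℕ) < b := by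
    intro l hl
    by_contra hcon
    push_neg at hcon
    -- the a+2 positions {i : i ≤ a} ∪ {l} all have values ≥ b
    set T : Finset (Fin (a + 1 + b)) := insert l (univ.filter fun i : Fin (a + 1 + b) => (i : ℕ) ≤ a) with hT
    have hTcard : T.card = a + 2 := by
      rw [hT, Finset.card_insert_of_notMem (by simp; omega)]
      have : ((univ : Finset (Fin (a + 1 + b))).filter fun i : Fin (a + 1 + b) => (i : ℕ) ≤ a)
          = (univ : Finset (Fin (a + 1 + b))).filter fun i : Fin (a + 1 + b) => (i : ℕ) < a + 1 := by
        ext x; simp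
      rw [this, card_filter_lt (a + 1 + b) (a + 1) (by omega)]
    have hsub : T.image π ⊆ (univ : Finset (Fin (a + 1 + b))).filter fun v : Fin (a + 1 + b) => b ≤ (v : ℕ) := by
      intro v hv
      obtain ⟨i, hiT, hiv⟩ := Finset.mem_image.mp hv
      simp only [mem_filter, mem_univ, true_and]
      rw [hT, Finset.mem_insert] at hiT
      rcases hiT with rfl | hiT
      · omega
      · simp only [mem_filter, mem_univ, true_and] at hiT
        rcases lt_or_eq_of_le hiT with hia | hia
        · have := hcross i l hia hl
          omega
        · have : i = ⟨a, hNa⟩ := Fin.ext hia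
          rw [this] at hiv
          rw [← hiv, hmax]
          omega
    have hcard2 : (T.image π).card = a + 2 := by
      rw [Finset.card_image_of_injective _ π.injective, hTcard]
    have hub := Finset.card_le_card hsub
    rw [hcard2, card_filter_ge (a + 1 + b) b (by omega)] at hub
    omega
  -- prefix values are in [b, a+b)
  have hprefix : ∀ i : Fin (a + 1 + b), (i : ℕ) < a → b ≤ (π i : ℕ) ∧ (π i : ℕ) < a + b := by
    intro i hi
    refine ⟨?_, hne i (by omega)⟩
    by_contra hcon
    push_neg at hcon
    set T : Finset (Fin (a + 1 + b)) := insert i (univ.filter fun l : Fin (a + 1 + b) => a < (l : ℕ)) with hT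
    have hTcard : T.card = b + 1 := by
      rw [hT, Finset.card_insert_of_notMem (by simp; omega)]
      have : ((univ : Finset (Fin (a + 1 + b))).filter fun l : Fin (a + 1 + b) => a < (l : ℕ))
          = (univ : Finset (Fin (a + 1 + b))).filter fun l : Fin (a + 1 + b) => a + 1 ≤ (l : ℕ) := by
        ext x; simp
      rw [this, card_filter_ge (a + 1 + b) (a + 1) (by omega)]
      omega
    have hsub : T.image π ⊆ (univ : Finset (Fin (a + 1 + b))).filter fun v : Fin (a + 1 + b) => (v : ℕ) < b := by
      intro v hv
      obtain ⟨x, hxT, hxv⟩ := Finset.mem_image.mp hv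
      simp only [mem_filter, mem_univ, true_and]
      rw [hT, Finset.mem_insert] at hxT
      rcases hxT with rfl | hxT
      · omega
      · simp only [mem_filter, mem_univ, true_and] at hxT
        have := hcross i x hi hxT
        have := hsuffix x hxT
        omega
    have hcard2 : (T.image π).card = b + 1 := by
      rw [Finset.card_image_of_injective _ π.injective, hTcard]
    have hub := Finset.card_le_card hsub
    rw [hcard2, card_filter_lt (a + 1 + b) b (by omega)] at hub
    omega
  -- build σ and τ
  have hσinj : Function.Injective (fun x : Fin a =>
      (⟨((π ⟨(x : ℕ), emb_lt x⟩ : Fin (a + 1 + b)) : ℕ) - b, by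
        have := (hprefix ⟨(x : ℕ), emb_lt x⟩ x.isLt).2; have := x.isLt; omega⟩ : Fin a)) := by
    intro x y hxy
    have hx := x.isLt; have hy := y.isLt
    have hvx := (hprefix ⟨(x : ℕ), emb_lt x⟩ hx).1
    have hvy := (hprefix ⟨(y : ℕ), emb_lt y⟩ hy).1
    have hval := congrArg Fin.val hxy
    simp only at hval
    have heq : (π ⟨(x : ℕ), emb_lt x⟩ : ℕ) = (π ⟨(y : ℕ), emb_lt y⟩ : ℕ) := by omega
    have := congrArg Fin.val (π.injective (Fin.ext heq))
    exact Fin.ext this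
  have hτinj : Function.Injective (fun x : Fin b =>
      (⟨((π ⟨a + 1 + (x : ℕ), shift_lt x⟩ : Fin (a + 1 + b)) : ℕ), by
        exact hsuffix _ (by show a < a + 1 + (x : ℕ); omega)⟩ : Fin b)) := by
    intro x y hxy
    have hval := congrArg Fin.val hxy
    simp only at hval
    have := congrArg Fin.val (π.injective (Fin.ext hval))
    have h2 : a + 1 + (x : ℕ) = a + 1 + (y : ℕ) := this
    exact Fin.ext (by omega)
  set σ : Equiv.Perm (Fin a) :=
    Equiv.ofBijective _ ((Finite.injective_iff_bijective).mp hσinj) with hσdef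
  set τ : Equiv.Perm (Fin b) :=
    Equiv.ofBijective _ ((Finite.injective_iff_bijective).mp hτinj) with hτdef
  have hσ_apply : ∀ x : Fin a, (σ x : ℕ) = (π ⟨(x : ℕ), emb_lt x⟩ : ℕ) - b := fun x => rfl
  have hτ_apply : ∀ x : Fin b, (τ x : ℕ) = (π ⟨a + 1 + (x : ℕ), shift_lt x⟩ : ℕ) := fun x => rfl
  refine ⟨σ, τ, ?_⟩
  apply Equiv.ext
  intro i
  apply Fin.ext
  rw [glue_apply]
  have hi := i.isLt
  rcases lt_trichotomy ((i : ℕ)) a with hia | hia | hia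
  · rw [glueFun_val_lt _ _ hia, hσ_apply]
    have hv := hprefix i hia
    have e : (⟨((⟨(i : ℕ), hia⟩ : Fin a) : ℕ), emb_lt (b := b) ⟨(i : ℕ), hia⟩⟩
        : Fin (a + 1 + b)) = i := Fin.ext rfl
    rw [e]
    omega
  · rw [glueFun_val_eq _ _ hia]
    have : i = ⟨a, hNa⟩ := Fin.ext hia
    rw [this, hmax]
  · have hib : (i : ℕ) - a - 1 < b := by omega
    rw [glueFun_val_gt _ _ hia hib, hτ_apply]
    have e : (⟨a + 1 + ((⟨(i : ℕ) - a - 1, hib⟩ : Fin b) : ℕ),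
        shift_lt ⟨(i : ℕ) - a - 1, hib⟩⟩ : Fin (a + 1 + b)) = i := by
      apply Fin.ext
      show a + 1 + ((i : ℕ) - a - 1) = (i : ℕ)
      omega
    rw [e]

end Surj

section FiberSum

variable {a b : ℕ}

lemma glue_pair_inj {σ σ' : Equiv.Perm (Fin a)} {τ τ' : Equiv.Perm (Fin b)}
    (h : glue σ τ = glue σ' τ') : σ = σ' ∧ τ = τ' := by
  constructor
  · apply Equiv.ext; intro x; apply Fin.ext
    have h1 : (glue σ τ ⟨(x : ℕ), emb_lt x⟩ : ℕ)
        = (glue σ' τ' ⟨(x : ℕ), emb_lt x⟩ : ℕ) := by rw [h]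
    rw [glue_apply, glue_apply, glueFun_val_emb σ τ x, glueFun_val_emb σ' τ' x] at h1
    omega
  · apply Equiv.ext; intro x; apply Fin.ext
    have h1 : (glue σ τ ⟨a + 1 + (x : ℕ), shift_lt x⟩ : ℕ)
        = (glue σ' τ' ⟨a + 1 + (x : ℕ), shift_lt x⟩ : ℕ) := by rw [h]
    rw [glue_apply, glue_apply, glueFun_val_shift σ τ x, glueFun_val_shift σ' τ' x] at h1
    exact h1

lemma fiber_sum (a b : ℕ) :
    ∑ π ∈ (AV132 (a + 1 + b)).filter
      (fun π => ((π ⟨a, by omega⟩ : Fin (a + 1 + b)) : ℕ) = a + b),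
        (Polynomial.X : Polynomial ℤ) ^ a21 π
      = (Polynomial.X : Polynomial ℤ) ^ ((a + 1) * b) * P21 a * P21 b := by
  classical
  rw [P21, P21, mul_assoc, Finset.sum_mul_sum]
  simp_rw [Finset.mul_sum]
  rw [← Finset.sum_product']
  refine (Finset.sum_bij
    (fun (p : Equiv.Perm (Fin a) × Equiv.Perm (Fin b)) _ => glue p.1 p.2) ?_ ?_ ?_ ?_).symm
  · intro p hp
    rw [Finset.mem_product] at hp
    obtain ⟨hp1, hp2⟩ := hp
    rw [AV132, mem_filter] at hp1 hp2
    simp only [mem_filter, mem_univ, true_and, AV132]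
    refine ⟨glue_avoids p.1 p.2 hp1.2 hp2.2, ?_⟩
    rw [glue_apply]
    exact glueFun_val_eq p.1 p.2 rfl
  · intro p hp q hq hpq
    have := glue_pair_inj hpq
    exact Prod.ext this.1 this.2
  · intro π hπ
    simp only [mem_filter, AV132, mem_univ, true_and] at hπ
    obtain ⟨σ, τ, hglue⟩ := glue_surj π hπ.1 hπ.2
    have havoid := glue_avoids_rev σ τ (by rw [hglue]; exact hπ.1)
    refine ⟨(σ, τ), ?_, hglue⟩
    rw [Finset.mem_product]
    constructor <;> simp only [AV132, mem_filter, mem_univ, true_and]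
    · exact havoid.1
    · exact havoid.2
  · intro p hp
    rw [a21_glue p.1 p.2, pow_add, pow_add]
    ring

lemma fiber_sum' (N a b : ℕ) (h : N = a + 1 + b) :
    ∑ π ∈ (AV132 N).filter
      (fun π => ((π ⟨a, by omega⟩ : Fin N) : ℕ) = a + b),
        (Polynomial.X : Polynomial ℤ) ^ a21 π
      = (Polynomial.X : Polynomial ℤ) ^ ((a + 1) * b) * P21 a * P21 b := by
  subst h
  exact fiber_sum a b

end FiberSum

/-- `P_n(t) = ∑_{k=1}^n t^{k(n-k)} P_{k-1}(t) P_{n-k}(t)`, `P_0 = 1`. -/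
theorem P21_recurrence :
    P21 0 = 1 ∧
    ∀ n : ℕ, 1 ≤ n →
      P21 n = ∑ k ∈ Finset.Icc 1 n,
        (Polynomial.X : Polynomial ℤ) ^ (k * (n - k)) * P21 (k - 1) * P21 (n - k) := by
  constructor
  · rw [P21]
    have h1 : AV132 0 = {1} := by
      apply Finset.eq_singleton_iff_unique_mem.mpr
      constructor
      · simp only [AV132, mem_filter, mem_univ, true_and]
        intro i j l
        exact i.elim0
      · intro π _
        ext i
        exact i.elim0
    rw [h1, Finset.sum_singleton]
    have h2 : a21 (1 : Equiv.Perm (Fin 0)) = 0 := by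
      rw [a21]
      apply Finset.card_eq_zero.mpr
      ext p
      simpa using p.1.elim0
    rw [h2, pow_zero]
  · intro n hn
    have hn1 : n - 1 < n := by omega
    have hmaps : ∀ π ∈ AV132 n, (π.symm ⟨n - 1, hn1⟩ : Fin n) ∈ (univ : Finset (Fin n)) :=
      fun _ _ => mem_univ _
    rw [P21, ← Finset.sum_fiberwise_of_maps_to hmaps]
    have hinner : ∀ k : Fin n,
        (∑ π ∈ (AV132 n).filter (fun π => π.symm ⟨n - 1, hn1⟩ = k),
          (Polynomial.X : Polynomial ℤ) ^ a21 π)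
        = (Polynomial.X : Polynomial ℤ) ^ (((k : ℕ) + 1) * (n - 1 - (k : ℕ)))
            * P21 (k : ℕ) * P21 (n - 1 - (k : ℕ)) := by
      intro k
      have hk := k.isLt
      have hfe : (AV132 n).filter (fun π => π.symm ⟨n - 1, hn1⟩ = k)
          = (AV132 n).filter (fun π =>
              ((π ⟨(k : ℕ), by omega⟩ : Fin n) : ℕ) = (k : ℕ) + (n - 1 - (k : ℕ))) := by
        ext π
        simp only [mem_filter, and_congr_right_iff]
        intro _
        rw [Equiv.symm_apply_eq]
        have he : (⟨(k : ℕ), by omega⟩ : Fin n) = k := Fin.ext rfl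
        rw [he]
        constructor
        · intro h
          rw [← h]
          show n - 1 = (k : ℕ) + (n - 1 - (k : ℕ))
          omega
        · intro h
          apply Fin.ext
          show n - 1 = ((π k : Fin n) : ℕ)
          omega
      rw [hfe]
      exact fiber_sum' n (k : ℕ) (n - 1 - (k : ℕ)) (by omega)
    rw [Finset.sum_congr rfl (fun k _ => hinner k)]
    refine Finset.sum_bij' (fun (k : Fin n) _ => (k : ℕ) + 1)
      (fun m hm => (⟨m - 1, by have := (Finset.mem_Icc.mp hm).2; omega⟩ : Fin n)) ?_ ?_ ?_ ?_ ?_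
    · intro k _
      rw [Finset.mem_Icc]
      have := k.isLt
      omega
    · intro m hm
      exact mem_univ _
    · intro k _
      apply Fin.ext
      show (k : ℕ) + 1 - 1 = (k : ℕ)
      omega
    · intro m hm
      simp only []
      have := (Finset.mem_Icc.mp hm).1
      show m - 1 + 1 = m
      omega
    · intro k _
      have e1 : n - 1 - (k : ℕ) = n - ((k : ℕ) + 1) := by omega
      rw [e1, show (k : ℕ) + 1 - 1 = (k : ℕ) from by omega]
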